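/- Let A be a prime noetherian ring and x a nonzero, non-unit, normal element of A such that xA is a completely prime ideal. If the localisation A_x at the powers of x is a noetherian unique factorisation domain, then so is A. -/

import Mathlib

/-- A ring is prime if `aRb = 0` implies `a = 0` or `b = 0`. -/
def IsPrimeRing (A : Type*) [Ring A] : Prop :=
  ∀ a b : A, (∀ r : A, a * r * b = 0) → a = 0 ∨ b = 0

/-- An element `x` is normal if `xA = Ax`. -/
def IsNormalElem {A : Type*} [Ring A] (x : A) : Prop :=
  {y | ∃ a, y = x * a} = {y | ∃ a, y = a * x}

/-- A two-sided ideal is prime. -/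
def TwoSidedIdeal.IsPrimeTS {A : Type*} [Ring A] (P : TwoSidedIdeal A) : Prop :=
  P ≠ ⊤ ∧ ∀ a b : A, (∀ r : A, a * r * b ∈ P) → a ∈ P ∨ b ∈ P

/-- A two-sided ideal is completely prime (the quotient is a domain). -/
def TwoSidedIdeal.IsCompletelyPrime {A : Type*} [Ring A] (P : TwoSidedIdeal A) : Prop :=
  P ≠ ⊤ ∧ ∀ a b : A, a * b ∈ P → a ∈ P ∨ b ∈ P

/-- A two-sided ideal is principal if it is generated by a normal element:
`I = xA = Ax` for some normal `x`. -/
def TwoSidedIdeal.IsPrincipalNormal {A : Type*} [Ring A] (I : TwoSidedIdeal A) : Prop :=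
  ∃ x : A, IsNormalElem x ∧ (∀ y, y ∈ I ↔ ∃ a, y = x * a)

/-- A noetherian unique factorisation ring: a prime noetherian ring in which every
nonzero prime ideal contains a nonzero principal prime ideal. -/
def IsNoethUFR (A : Type*) [Ring A] : Prop :=
  IsPrimeRing A ∧ IsNoetherianRing A ∧
    ∀ P : TwoSidedIdeal A, P.IsPrimeTS → P ≠ ⊥ →
      ∃ Q : TwoSidedIdeal A, Q ≠ ⊥ ∧ Q.IsPrimeTS ∧ Q.IsPrincipalNormal ∧ Q ≤ P

/-- A prime ideal of height one. -/
def TwoSidedIdeal.IsHeightOnePrime {A : Type*} [Ring A] (P : TwoSidedIdeal A) : Prop :=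
  P.IsPrimeTS ∧ P ≠ ⊥ ∧ ∀ Q : TwoSidedIdeal A, Q.IsPrimeTS → Q < P → Q = ⊥

/-- A noetherian unique factorisation domain: a noetherian UFR which is a domain and in
which every height one prime ideal is completely prime. -/
def IsNoethUFD (A : Type*) [Ring A] : Prop :=
  IsNoethUFR A ∧ IsDomain A ∧
    ∀ P : TwoSidedIdeal A, P.IsHeightOnePrime → P.IsCompletelyPrime

namespace NagataAux

variable {A : Type*} [Ring A]

/-- For a normal element, `a * x` can be rewritten as `x * b`. -/
noncomputable def nphi (x : A) (hxn : IsNormalElem x) (a : A) : A :=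
  ((Set.ext_iff.mp hxn (a * x)).mpr ⟨a, rfl⟩).choose

lemma nphi_spec (x : A) (hxn : IsNormalElem x) (a : A) : a * x = x * nphi x hxn a :=
  ((Set.ext_iff.mp hxn (a * x)).mpr ⟨a, rfl⟩).choose_spec

/-- For a normal element, `x * a` can be rewritten as `b * x`. -/
noncomputable def npsi (x : A) (hxn : IsNormalElem x) (a : A) : A :=
  ((Set.ext_iff.mp hxn (x * a)).mp ⟨a, rfl⟩).choose

lemma npsi_spec (x : A) (hxn : IsNormalElem x) (a : A) : x * a = npsi x hxn a * x :=
  ((Set.ext_iff.mp hxn (x * a)).mp ⟨a, rfl⟩).choose_spec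

end NagataAux

open OreLocalization in
/-- Nagata's lemma, part (iii): if the localisation `A_x` of `A` at the powers of a
nonzero non-unit normal element `x` generating a completely prime ideal is a noetherian
UFD, then so is `A`. -/
theorem nagata_part_iii {A : Type*} [Ring A]
    (hNoeth : IsNoetherianRing A) (hPrime : IsPrimeRing A)
    (x : A) (hx0 : x ≠ 0) (hxu : ¬ IsUnit x) (hxn : IsNormalElem x)
    (hxcp : (TwoSidedIdeal.span {x}).IsCompletelyPrime)
    [OreSet (Submonoid.powers x)]
    (hloc : IsNoethUFD (A[(Submonoid.powers x)⁻¹])) :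
    IsNoethUFD A := by
  classical
  obtain ⟨⟨hlocPrime, hlocNoeth, hlocUFR⟩, hlocDom, hlocH1⟩ := hloc
  haveI hDAx : IsDomain (A[(Submonoid.powers x)⁻¹]) := hlocDom
  haveI hNAx : IsNoetherianRing (A[(Submonoid.powers x)⁻¹]) := hlocNoeth
  -- the localization map, made opaque
  obtain ⟨f, hfapp⟩ : ∃ f : A →+* A[(Submonoid.powers x)⁻¹],
      ∀ a, f a = (a /ₒ (1 : Submonoid.powers x)) :=
    ⟨numeratorRingHom, fun _ => rfl⟩
  -- the twisting maps
  obtain ⟨φ, hφ⟩ : ∃ φ : A → A, ∀ a, a * x = x * φ a :=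
    ⟨NagataAux.nphi x hxn, NagataAux.nphi_spec x hxn⟩
  obtain ⟨ψ, hψ⟩ : ∃ ψ : A → A, ∀ a, x * a = ψ a * x :=
    ⟨NagataAux.npsi x hxn, NagataAux.npsi_spec x hxn⟩
  -- regularity of x
  have hregl : ∀ a : A, x * a = 0 → a = 0 := by
    intro a ha
    rcases hPrime x a (fun r => by rw [hψ r, mul_assoc, ha, mul_zero]) with h0 | h0
    · exact absurd h0 hx0
    · exact h0
  have hregr : ∀ a : A, a * x = 0 → a = 0 := by
    intro a ha
    rcases hPrime a x (fun r => by rw [mul_assoc, hφ r, ← mul_assoc, ha, zero_mul]) with h0 | h0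
    · exact h0
    · exact absurd h0 hx0
  have hcl : ∀ a b : A, x * a = x * b → a = b := by
    intro a b h
    have : x * (a - b) = 0 := by rw [mul_sub, h, sub_self]
    exact sub_eq_zero.mp (hregl _ this)
  have hcr : ∀ a b : A, a * x = b * x → a = b := by
    intro a b h
    have : (a - b) * x = 0 := by rw [sub_mul, h, sub_self]
    exact sub_eq_zero.mp (hregr _ this)
  -- φ and ψ are mutually inverse ring endomorphisms
  have hφψ : ∀ a, φ (ψ a) = a := fun a => (hcl _ _ (by rw [← hφ (ψ a), ← hψ a])).symm
  have hψφ : ∀ a, ψ (φ a) = a := fun a => (hcr _ _ (by rw [← hψ (φ a), ← hφ a])).symm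
  have hφmul : ∀ a b, φ (a * b) = φ a * φ b := by
    intro a b
    apply hcl
    rw [← hφ (a*b), mul_assoc a b x, hφ b, ← mul_assoc, hφ a, mul_assoc]
  have hφadd : ∀ a b, φ (a + b) = φ a + φ b := by
    intro a b
    apply hcl
    rw [← hφ (a+b), add_mul, hφ a, hφ b, mul_add]
  have hψmul : ∀ a b, ψ (a * b) = ψ a * ψ b := by
    intro a b
    apply hcr
    rw [← hψ (a*b), ← mul_assoc, hψ a, mul_assoc, hψ b, ← mul_assoc]
  have hψadd : ∀ a b, ψ (a + b) = ψ a + ψ b := by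
    intro a b
    apply hcr
    rw [← hψ (a+b), mul_add, hψ a, hψ b, add_mul]
  have hφzero : φ 0 = 0 := hcl _ _ (by rw [← hφ 0, zero_mul, mul_zero])
  have hψzero : ψ 0 = 0 := hcr _ _ (by rw [← hψ 0, mul_zero, zero_mul])
  have hφx : φ x = x := hcl _ _ (hφ x).symm
  have hψx : ψ x = x := hcr _ _ (hψ x).symm
  -- iterates
  have hφitmul : ∀ (n : ℕ) (a b : A), φ^[n] (a * b) = φ^[n] a * φ^[n] b := by
    intro n
    induction n with
    | zero => intro a b; simp
    | succ n ih =>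
      intro a b
      simp only [Function.iterate_succ_apply', ih, hφmul]
  have hψitmul : ∀ (n : ℕ) (a b : A), ψ^[n] (a * b) = ψ^[n] a * ψ^[n] b := by
    intro n
    induction n with
    | zero => intro a b; simp
    | succ n ih =>
      intro a b
      simp only [Function.iterate_succ_apply', ih, hψmul]
  have hψitadd : ∀ (n : ℕ) (a b : A), ψ^[n] (a + b) = ψ^[n] a + ψ^[n] b := by
    intro n
    induction n with
    | zero => intro a b; simp
    | succ n ih =>
      intro a b
      simp only [Function.iterate_succ_apply', ih, hψadd]
  have hψitzero : ∀ (n : ℕ), ψ^[n] 0 = 0 := by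
    intro n
    induction n with
    | zero => simp
    | succ n ih => simp only [Function.iterate_succ_apply', ih, hψzero]
  have hφψit : ∀ (n : ℕ) (a : A), φ^[n] (ψ^[n] a) = a :=
    fun n => (Function.LeftInverse.iterate hφψ n)
  have hψφit : ∀ (n : ℕ) (a : A), ψ^[n] (φ^[n] a) = a :=
    fun n => (Function.LeftInverse.iterate hψφ n)
  -- power twisting
  have hpowφ : ∀ (n : ℕ) (a : A), a * x^n = x^n * φ^[n] a := by
    intro n
    induction n with
    | zero => intro a; simp
    | succ n ih =>
      intro a
      rw [pow_succ, ← mul_assoc, ih, mul_assoc, hφ (φ^[n] a), ← Function.iterate_succ_apply' φ,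
        ← mul_assoc, ← pow_succ]
  have hpowψ : ∀ (n : ℕ) (a : A), x^n * a = ψ^[n] a * x^n := by
    intro n
    induction n with
    | zero => intro a; simp
    | succ n ih =>
      intro a
      rw [pow_succ', mul_assoc, ih, ← mul_assoc, hψ (ψ^[n] a), ← Function.iterate_succ_apply' ψ,
        mul_assoc, ← pow_succ']
  -- iterates fix x
  have hφitx : ∀ (n : ℕ), φ^[n] x = x := by
    intro n; induction n with
    | zero => simp
    | succ n ih => simp only [Function.iterate_succ_apply', ih, hφx]
  have hreglpow : ∀ (n : ℕ) (a : A), x^n * a = 0 → a = 0 := by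
    intro n; induction n with
    | zero => intro a h; simpa using h
    | succ n ih => intro a h; rw [pow_succ', mul_assoc] at h; exact ih _ (hregl _ h)
  have hcrpow : ∀ (n : ℕ) (a b : A), a * x^n = b * x^n → a = b := by
    intro n; induction n with
    | zero => intro a b h; simpa using h
    | succ n ih =>
      intro a b h
      rw [pow_succ, ← mul_assoc, ← mul_assoc] at h
      exact ih _ _ (hcr _ _ h)
  have hclpow : ∀ (n : ℕ) (a b : A), x^n * a = x^n * b → a = b := by
    intro n a b h
    have : x^n * (a - b) = 0 := by rw [mul_sub, h, sub_self]
    exact sub_eq_zero.mp (hreglpow n _ this)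
  -- injectivity of f
  have hfinj : ∀ a b : A, f a = f b → a = b := by
    intro a b h
    have hinj : Function.Injective (numeratorHom : A → A[(Submonoid.powers x)⁻¹]) := by
      apply numeratorHom_inj
      intro s hs
      obtain ⟨n, rfl⟩ := hs
      rw [mem_nonZeroDivisorsLeft_iff]
      exact hreglpow n
    apply hinj
    rw [numeratorHom_apply, numeratorHom_apply, ← hfapp, ← hfapp, h]
  have hf0 : ∀ a : A, f a = 0 → a = 0 := fun a h => hfinj a 0 (by rw [h, map_zero])
  -- A is a domain
  haveI : Nontrivial A := by
    refine ⟨⟨0, 1, fun h01 => ?_⟩⟩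
    have : (0 : A[(Submonoid.powers x)⁻¹]) = 1 := by
      rw [← map_zero f, ← map_one f, h01]
    exact zero_ne_one this
  haveI : NoZeroDivisors A := by
    refine ⟨fun {a b} hab => ?_⟩
    have : f a * f b = 0 := by rw [← map_mul, hab, map_zero]
    rcases mul_eq_zero.mp this with h | h
    · exact Or.inl (hf0 _ h)
    · exact Or.inr (hf0 _ h)
  haveI hdomA : IsDomain A := NoZeroDivisors.to_isDomain A
  -- the unit U = f x
  obtain ⟨U, hU⟩ : ∃ U : (A[(Submonoid.powers x)⁻¹])ˣ, (U : A[(Submonoid.powers x)⁻¹]) = f x :=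
    ⟨numeratorUnit ⟨x, Submonoid.mem_powers x⟩, by rw [hfapp]; rfl⟩
  have hUn : ∀ n : ℕ, ((U^n :(A[(Submonoid.powers x)⁻¹])ˣ) : A[(Submonoid.powers x)⁻¹]) = f (x^n) := by
    intro n; rw [Units.val_pow_eq_pow_val, hU, ← map_pow]
  -- left-fraction decomposition
  have L1' : ∀ z : A[(Submonoid.powers x)⁻¹], ∃ (n : ℕ) (c : A), f (x^n) * z = f c := by
    intro z
    induction z using OreLocalization.ind with
    | _ r s =>
      obtain ⟨n, hn⟩ := s.2
      refine ⟨n, r, ?_⟩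
      rw [hfapp, hfapp, show x^n = (s : A) from hn]
      exact OreLocalization.mul_cancel
  -- conjugation helper
  have hconj : ∀ (u : (A[(Submonoid.powers x)⁻¹])ˣ) (a b : A[(Submonoid.powers x)⁻¹]),
      a * ↑u = ↑u * b → ↑u⁻¹ * a = b * ↑u⁻¹ := by
    intro u a b h
    have h1 : a = a * ↑u * ↑u⁻¹ := by rw [mul_assoc, Units.mul_inv, mul_one]
    rw [h1, h, ← mul_assoc, ← mul_assoc, Units.inv_mul, one_mul]
  have hfU : ∀ (n : ℕ) (t : A), f t * ↑(U^n) = ↑(U^n) * f (φ^[n] t) := by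
    intro n t
    rw [hUn, ← map_mul, ← map_mul, hpowφ n t]
  have hUf : ∀ (n : ℕ) (t : A), ↑(U^n) * f t = f (ψ^[n] t) * ↑(U^n) := by
    intro n t
    rw [hUn, ← map_mul, ← map_mul, hpowψ n t]
  have hconjφ : ∀ (n : ℕ) (t : A), ↑(U^n)⁻¹ * f t = f (φ^[n] t) * ↑(U^n)⁻¹ :=
    fun n t => hconj _ _ _ (hfU n t)
  have hconjψ : ∀ (n : ℕ) (t : A), f t * ↑(U^n)⁻¹ = ↑(U^n)⁻¹ * f (ψ^[n] t) :=
    fun n t => (hconj _ _ _ (hUf n t).symm).symm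
  -- right-fraction decomposition
  have L1 : ∀ z : A[(Submonoid.powers x)⁻¹], ∃ (n : ℕ) (c : A), z * f (x^n) = f c := by
    intro z
    obtain ⟨n, c, hc⟩ := L1' z
    refine ⟨n, φ^[n] c, ?_⟩
    have hz : z = ↑(U^n)⁻¹ * f c := by
      rw [← hc, ← hUn, ← mul_assoc, Units.inv_mul, one_mul]
    calc z * f (x^n) = ↑(U^n)⁻¹ * (f c * f (x^n)) := by rw [hz, mul_assoc]
      _ = ↑(U^n)⁻¹ * (↑(U^n) * f (φ^[n] c)) := by rw [← map_mul, hpowφ n c, map_mul, hUn]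
      _ = f (φ^[n] c) := by rw [← mul_assoc, Units.inv_mul, one_mul]
  -- ideal-unit helpers
  have hIdU : ∀ (J : TwoSidedIdeal (A[(Submonoid.powers x)⁻¹])) (u : (A[(Submonoid.powers x)⁻¹])ˣ)
      (z : A[(Submonoid.powers x)⁻¹]), z * ↑u ∈ J → z ∈ J := by
    intro J u z h
    have := J.mul_mem_right _ (↑u⁻¹) h
    rwa [mul_assoc, Units.mul_inv, mul_one] at this
  have hIdU' : ∀ (J : TwoSidedIdeal (A[(Submonoid.powers x)⁻¹])) (u : (A[(Submonoid.powers x)⁻¹])ˣ)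
      (z : A[(Submonoid.powers x)⁻¹]), ↑u * z ∈ J → z ∈ J := by
    intro J u z h
    have := J.mul_mem_left (↑u⁻¹) _ h
    rwa [← mul_assoc, Units.inv_mul, one_mul] at this
  -- characterization of the span of x
  have hIx : ∃ I : TwoSidedIdeal A, ∀ y, y ∈ I ↔ ∃ a, y = x * a := by
    have c1 : (0:A) ∈ {y : A | ∃ a, y = x * a} := ⟨0, (mul_zero x).symm⟩
    have c2 : ∀ {y z : A}, y ∈ {y : A | ∃ a, y = x * a} → z ∈ {y : A | ∃ a, y = x * a} →
        y + z ∈ {y : A | ∃ a, y = x * a} := by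
      rintro y z ⟨a, rfl⟩ ⟨b, rfl⟩; exact ⟨a + b, (mul_add x a b).symm⟩
    have c3 : ∀ {y : A}, y ∈ {y : A | ∃ a, y = x * a} → -y ∈ {y : A | ∃ a, y = x * a} := by
      rintro y ⟨a, rfl⟩; exact ⟨-a, (mul_neg x a).symm⟩
    have c4 : ∀ {r y : A}, y ∈ {y : A | ∃ a, y = x * a} → r * y ∈ {y : A | ∃ a, y = x * a} := by
      rintro r y ⟨a, rfl⟩; exact ⟨φ r * a, by rw [← mul_assoc, hφ r, mul_assoc]⟩
    have c5 : ∀ {y r : A}, y ∈ {y : A | ∃ a, y = x * a} → y * r ∈ {y : A | ∃ a, y = x * a} := by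
      rintro y r ⟨a, rfl⟩; exact ⟨a * r, mul_assoc x a r⟩
    exact ⟨TwoSidedIdeal.mk' _ c1 c2 c3 c4 c5,
      fun y => TwoSidedIdeal.mem_mk' _ c1 c2 c3 c4 c5 y⟩
  obtain ⟨Ix, hIx⟩ := hIx
  have hspanx : ∀ y : A, y ∈ TwoSidedIdeal.span {x} ↔ ∃ a, y = x * a := by
    intro y
    constructor
    · intro hy
      exact (hIx y).mp (TwoSidedIdeal.mem_span_iff.mp hy Ix
        (fun t ht => by rw [Set.mem_singleton_iff] at ht; rw [ht];
                        exact (hIx x).mpr ⟨1, (mul_one x).symm⟩))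
    · rintro ⟨a, rfl⟩
      exact TwoSidedIdeal.mul_mem_right _ _ _ (TwoSidedIdeal.subset_span (Set.mem_singleton x))
  have hspanx' : ∀ y : A, y ∈ TwoSidedIdeal.span {x} ↔ ∃ a, y = a * x := by
    intro y
    rw [hspanx y]
    constructor
    · rintro ⟨a, rfl⟩; exact ⟨ψ a, hψ a⟩
    · rintro ⟨a, rfl⟩; exact ⟨φ a, hφ a⟩
  -- x is not in span x would make it a unit; and 1 ∉ span x
  have hxnot1 : (1:A) ∉ TwoSidedIdeal.span {x} := by
    intro h1
    obtain ⟨a, ha⟩ := (hspanx 1).mp h1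
    apply hxu
    have hax : a * x = 1 := by
      have : x * (a * x) = x * 1 := by rw [← mul_assoc, ← ha, one_mul, mul_one]
      exact hcl _ _ this
    exact ⟨⟨x, a, ha.symm, hax⟩, rfl⟩
  -- contraction of an ideal of the localization
  have hCJex : ∀ J : TwoSidedIdeal (A[(Submonoid.powers x)⁻¹]),
      ∃ C : TwoSidedIdeal A, ∀ a, a ∈ C ↔ f a ∈ J := by
    intro J
    have c1 : (0:A) ∈ {a : A | f a ∈ J} := by simp only [Set.mem_setOf_eq, map_zero]; exact J.zero_mem
    have c2 : ∀ {y z : A}, y ∈ {a : A | f a ∈ J} → z ∈ {a : A | f a ∈ J} →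
        y + z ∈ {a : A | f a ∈ J} := by
      intro y z hy hz
      simp only [Set.mem_setOf_eq, map_add] at *
      exact J.add_mem hy hz
    have c3 : ∀ {y : A}, y ∈ {a : A | f a ∈ J} → -y ∈ {a : A | f a ∈ J} := by
      intro y hy
      simp only [Set.mem_setOf_eq, map_neg] at *
      exact J.neg_mem hy
    have c4 : ∀ {r y : A}, y ∈ {a : A | f a ∈ J} → r * y ∈ {a : A | f a ∈ J} := by
      intro r y hy
      simp only [Set.mem_setOf_eq, map_mul] at *
      exact J.mul_mem_left _ _ hy
    have c5 : ∀ {y r : A}, y ∈ {a : A | f a ∈ J} → y * r ∈ {a : A | f a ∈ J} := by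
      intro y r hy
      simp only [Set.mem_setOf_eq, map_mul] at *
      exact J.mul_mem_right _ _ hy
    exact ⟨TwoSidedIdeal.mk' _ c1 c2 c3 c4 c5,
      fun a => TwoSidedIdeal.mem_mk' _ c1 c2 c3 c4 c5 a⟩
  -- contraction of a prime ideal is prime
  have hcontr : ∀ (J : TwoSidedIdeal (A[(Submonoid.powers x)⁻¹])) (C : TwoSidedIdeal A),
      (∀ a, a ∈ C ↔ f a ∈ J) → J.IsPrimeTS → C.IsPrimeTS := by
    intro J C hC hJ
    constructor
    · intro hCtop
      apply hJ.1
      refine eq_top_iff.mpr fun z _ => ?_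
      have h1 : (1:A) ∈ C := by rw [hCtop]; exact TwoSidedIdeal.mem_top _
      have h2 := (hC 1).mp h1
      rw [map_one] at h2
      have h3 := J.mul_mem_left z 1 h2
      rwa [mul_one] at h3
    · intro a b hab
      have hDadd : ∀ {t t' : A}, (∀ s : A, f (a * s * t) ∈ J) → (∀ s : A, f (a * s * t') ∈ J) →
          (∀ s : A, f (a * s * (t + t')) ∈ J) := by
        intro t t' ht ht' s
        rw [show a * s * (t + t') = a * s * t + a * s * t' from mul_add _ _ _, map_add]
        exact J.add_mem (ht s) (ht' s)
      have hDmull : ∀ {r t : A}, (∀ s : A, f (a * s * t) ∈ J) →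
          (∀ s : A, f (a * s * (r * t)) ∈ J) := by
        intro r t ht s
        rw [show a * s * (r * t) = a * (s * r) * t by rw [← mul_assoc, mul_assoc a s r]]
        exact ht (s * r)
      have hbD : ∀ s : A, f (a * s * b) ∈ J := fun s => (hC _).mp (hab s)
      have hψD : ∀ {t : A}, (∀ s : A, f (a * s * t) ∈ J) →
          (∀ s : A, f (a * s * ψ t) ∈ J) := by
        intro t ht s
        have keyA : (a * s * ψ t) * x = a * (s * x) * t := by
          rw [mul_assoc (a*s), ← hψ t, ← mul_assoc, mul_assoc a s x]
        have key : f (a * s * ψ t) * ↑U = f (a * (s * x) * t) := by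
          rw [hU, ← map_mul, keyA]
        have hmem : f (a * s * ψ t) * ↑U ∈ J := by rw [key]; exact ht (s * x)
        exact hIdU J U _ hmem
      have hGex : ∀ k : ℕ, ∃ G : Ideal A, ∀ t, t ∈ G ↔ (∀ s : A, f (a * s * ψ^[k] t) ∈ J) := by
        intro k
        refine ⟨{ carrier := {t : A | ∀ s : A, f (a * s * ψ^[k] t) ∈ J},
                  add_mem' := ?_, zero_mem' := ?_, smul_mem' := ?_ }, fun t => Iff.rfl⟩
        · intro t t' ht ht'
          have := hDadd ht ht'
          intro s
          rw [hψitadd k]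
          exact this s
        · intro s
          rw [hψitzero k]
          have h0 : a * s * 0 = 0 := mul_zero _
          rw [h0, map_zero]
          exact J.zero_mem
        · intro c t ht
          have := hDmull (r := ψ^[k] c) ht
          intro s
          have he : ψ^[k] (c • t) = ψ^[k] c * ψ^[k] t := by
            rw [smul_eq_mul, hψitmul]
          rw [he]
          exact this s
      choose G hGmem using hGex
      have hGmono : Monotone G := by
        apply monotone_nat_of_le_succ
        intro k t ht
        have h1 := (hGmem k t).mp ht
        refine (hGmem (k+1) t).mpr ?_
        rw [Function.iterate_succ_apply']
        exact hψD h1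
      obtain ⟨K, hK⟩ := monotone_stabilizes_iff_noetherian.mpr hNoeth ⟨G, hGmono⟩
      have hstab : ∀ t : A, (∀ s : A, f (a * s * ψ^[K+1] t) ∈ J) →
          (∀ s : A, f (a * s * ψ^[K] t) ∈ J) := by
        intro t ht
        have h1 : t ∈ G (K+1) := (hGmem (K+1) t).mpr ht
        have heq : G K = G (K+1) := hK (K+1) (Nat.le_succ K)
        have h2 : t ∈ G K := by rw [heq]; exact h1
        exact (hGmem K t).mp h2
      have hφD : ∀ t : A, (∀ s : A, f (a * s * t) ∈ J) →
          (∀ s : A, f (a * s * φ t) ∈ J) := by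
        intro t ht
        have h1 : ∀ s : A, f (a * s * ψ^[K+1] (φ^[K+1] t)) ∈ J := by
          intro s; rw [hψφit]; exact ht s
        have h2 := hstab _ h1
        intro s
        have h3 := h2 s
        rwa [Function.iterate_succ_apply, hψφit K (φ t)] at h3
      have hφitD : ∀ (n : ℕ) (t : A), (∀ s : A, f (a * s * t) ∈ J) →
          (∀ s : A, f (a * s * φ^[n] t) ∈ J) := by
        intro n
        induction n with
        | zero => intro t ht; simpa using ht
        | succ n ih =>
          intro t ht
          intro s
          rw [Function.iterate_succ_apply']
          exact hφD _ (ih _ ht) s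
      have hzmem : ∀ z, f a * z * f b ∈ J := by
        intro z
        obtain ⟨n, c, hc⟩ := L1 z
        have hz : z = f c * ↑(U^n)⁻¹ := by
          rw [← hc, ← hUn, mul_assoc, Units.mul_inv, mul_one]
        have hDb : f (a * c * φ^[n] b) ∈ J := hφitD n b hbD c
        have he : f a * (f c * ↑(U^n)⁻¹) * f b = f (a * c * φ^[n] b) * ↑(U^n)⁻¹ := by
          rw [← mul_assoc (f a) (f c), mul_assoc (f a * f c), hconjφ n b, ← mul_assoc,
            ← map_mul, ← map_mul]
        rw [hz, he]
        exact J.mul_mem_right _ _ hDb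
      rcases hJ.2 (f a) (f b) hzmem with h | h
      · exact Or.inl ((hC a).mpr h)
      · exact Or.inr ((hC b).mpr h)
  -- extension of a prime not containing x
  have hExt : ∀ P : TwoSidedIdeal A, P.IsPrimeTS → x ∉ P →
      ∃ E : TwoSidedIdeal (A[(Submonoid.powers x)⁻¹]),
        (∀ z, z ∈ E ↔ ∃ (n : ℕ) (p : A), p ∈ P ∧ z * f (x^n) = f p) ∧
        (∀ a : A, f a ∈ E ↔ a ∈ P) ∧ E.IsPrimeTS := by
    intro P hP hxP
    have hxpow : ∀ n : ℕ, x^n ∉ P := by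
      intro n
      induction n with
      | zero =>
        intro h
        apply hP.1
        refine eq_top_iff.mpr fun z _ => ?_
        have h2 := P.mul_mem_left z _ h
        rwa [pow_zero, mul_one] at h2
      | succ n ih =>
        intro h
        have hr : ∀ r : A, x * r * x^n ∈ P := by
          intro r
          have he : x * r * x^n = ψ r * x^(n+1) := by rw [hψ r, mul_assoc, ← pow_succ']
          rw [he]; exact P.mul_mem_left _ _ h
        rcases hP.2 x (x^n) hr with h0 | h0
        · exact hxP h0
        · exact ih h0
    have hsat : ∀ (n : ℕ) (a : A), a * x^n ∈ P → a ∈ P := by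
      intro n a ha
      have hr : ∀ r : A, a * r * x^n ∈ P := by
        intro r
        have he : a * r * x^n = a * x^n * φ^[n] r := by
          rw [mul_assoc, hpowφ n r, ← mul_assoc]
        rw [he]; exact P.mul_mem_right _ _ ha
      rcases hP.2 a (x^n) hr with h0 | h0
      · exact h0
      · exact absurd h0 (hxpow n)
    have hφP : ∀ p, p ∈ P → φ p ∈ P := by
      intro p hp
      have hr : ∀ r : A, x * r * φ p ∈ P := by
        intro r
        have he : x * r * φ p = ψ r * (p * x) := by
          rw [hψ r, mul_assoc, ← hφ p]
        rw [he]
        exact P.mul_mem_left _ _ (P.mul_mem_right _ _ hp)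
      rcases hP.2 x (φ p) hr with h0 | h0
      · exact absurd h0 hxP
      · exact h0
    have hφitP : ∀ (n : ℕ) (p : A), p ∈ P → φ^[n] p ∈ P := by
      intro n
      induction n with
      | zero => intro p hp; simpa using hp
      | succ n ih =>
        intro p hp
        rw [Function.iterate_succ_apply']
        exact hφP _ (ih _ hp)
    -- closure properties of the extension set
    have hEc1 : (0 : A[(Submonoid.powers x)⁻¹]) ∈
        {z : A[(Submonoid.powers x)⁻¹] | ∃ (n : ℕ) (p : A), p ∈ P ∧ z * f (x^n) = f p} :=
      ⟨0, 0, P.zero_mem, by rw [zero_mul, map_zero]⟩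
    have hEc2 : ∀ {z w : A[(Submonoid.powers x)⁻¹]},
        z ∈ {z : A[(Submonoid.powers x)⁻¹] | ∃ (n : ℕ) (p : A), p ∈ P ∧ z * f (x^n) = f p} →
        w ∈ {z : A[(Submonoid.powers x)⁻¹] | ∃ (n : ℕ) (p : A), p ∈ P ∧ z * f (x^n) = f p} →
        z + w ∈ {z : A[(Submonoid.powers x)⁻¹] | ∃ (n : ℕ) (p : A), p ∈ P ∧ z * f (x^n) = f p} := by
      rintro z w ⟨n, p, hp, hzp⟩ ⟨m, q, hq, hwq⟩
      refine ⟨n + m, p * x^m + q * x^n,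
        P.add_mem (P.mul_mem_right _ _ hp) (P.mul_mem_right _ _ hq), ?_⟩
      have h1 : f (x^(n+m)) = f (x^n) * f (x^m) := by rw [← map_mul, ← pow_add]
      have h2 : f (x^(n+m)) = f (x^m) * f (x^n) := by rw [← map_mul, ← pow_add, add_comm]
      rw [add_mul, map_add]
      congr 1
      · rw [h1, ← mul_assoc, hzp, ← map_mul]
      · rw [h2, ← mul_assoc, hwq, ← map_mul]
    have hEc3 : ∀ {z : A[(Submonoid.powers x)⁻¹]},
        z ∈ {z : A[(Submonoid.powers x)⁻¹] | ∃ (n : ℕ) (p : A), p ∈ P ∧ z * f (x^n) = f p} →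
        -z ∈ {z : A[(Submonoid.powers x)⁻¹] | ∃ (n : ℕ) (p : A), p ∈ P ∧ z * f (x^n) = f p} := by
      rintro z ⟨n, p, hp, hzp⟩
      exact ⟨n, -p, P.neg_mem hp, by rw [neg_mul, hzp, map_neg]⟩
    have hEc4 : ∀ {w z : A[(Submonoid.powers x)⁻¹]},
        z ∈ {z : A[(Submonoid.powers x)⁻¹] | ∃ (n : ℕ) (p : A), p ∈ P ∧ z * f (x^n) = f p} →
        w * z ∈ {z : A[(Submonoid.powers x)⁻¹] | ∃ (n : ℕ) (p : A), p ∈ P ∧ z * f (x^n) = f p} := by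
      rintro w z ⟨n, p, hp, hzp⟩
      obtain ⟨m, c, hwc⟩ := L1 w
      refine ⟨n + m, c * φ^[m] p, P.mul_mem_left _ _ (hφitP m p hp), ?_⟩
      calc w * z * f (x^(n+m)) = w * (z * f (x^n)) * f (x^m) := by
            rw [pow_add, map_mul, ← mul_assoc, mul_assoc w z (f (x^n))]
        _ = w * (f (x^m) * f (φ^[m] p)) := by
            rw [hzp, mul_assoc, ← map_mul, hpowφ m p, map_mul]
        _ = f (c * φ^[m] p) := by rw [← mul_assoc, hwc, ← map_mul]
    have hEc5 : ∀ {z w : A[(Submonoid.powers x)⁻¹]},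
        z ∈ {z : A[(Submonoid.powers x)⁻¹] | ∃ (n : ℕ) (p : A), p ∈ P ∧ z * f (x^n) = f p} →
        z * w ∈ {z : A[(Submonoid.powers x)⁻¹] | ∃ (n : ℕ) (p : A), p ∈ P ∧ z * f (x^n) = f p} := by
      rintro z w ⟨n, p, hp, hzp⟩
      obtain ⟨m, c, hwc⟩ := L1 w
      refine ⟨m + n, p * φ^[n] c, P.mul_mem_right _ _ hp, ?_⟩
      calc z * w * f (x^(m+n)) = z * (w * f (x^m)) * f (x^n) := by
            rw [pow_add, map_mul, ← mul_assoc, mul_assoc z w (f (x^m))]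
        _ = z * f (x^n) * f (φ^[n] c) := by
            rw [hwc, mul_assoc, ← map_mul, hpowφ n c, map_mul, ← mul_assoc]
        _ = f (p * φ^[n] c) := by rw [hzp, ← map_mul]
    set E : TwoSidedIdeal (A[(Submonoid.powers x)⁻¹]) :=
      TwoSidedIdeal.mk' _ hEc1 hEc2 hEc3 hEc4 hEc5 with hEdef
    have hE : ∀ z, z ∈ E ↔ ∃ (n : ℕ) (p : A), p ∈ P ∧ z * f (x^n) = f p := by
      intro z
      rw [hEdef]
      exact TwoSidedIdeal.mem_mk' _ hEc1 hEc2 hEc3 hEc4 hEc5 z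
    have hEval : ∀ (z : A[(Submonoid.powers x)⁻¹]) (m : ℕ) (c : A),
        z ∈ E → z * f (x^m) = f c → c ∈ P := by
      intro z m c hz hzc
      obtain ⟨k, p, hp, hzp⟩ := (hE z).mp hz
      have hcp' : c * x^k = p * x^m := by
        apply hfinj
        calc f (c * x^k) = z * f (x^m) * f (x^k) := by rw [map_mul, hzc]
          _ = z * f (x^k) * f (x^m) := by
              rw [mul_assoc, mul_assoc, ← map_mul, ← map_mul, ← pow_add, ← pow_add, add_comm]
          _ = f (p * x^m) := by rw [hzp, ← map_mul]
      rcases le_total k m with hkm | hmk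
      · have he : c * x^k = p * x^(m-k) * x^k := by
          rw [mul_assoc, ← pow_add, Nat.sub_add_cancel hkm, hcp']
        have hc := hcrpow k _ _ he
        rw [hc]
        exact P.mul_mem_right _ _ hp
      · have he : c * x^(k-m) * x^m = p * x^m := by
          rw [mul_assoc, ← pow_add, Nat.sub_add_cancel hmk, hcp']
        have hc := hcrpow m _ _ he
        exact hsat (k-m) c (hc.symm ▸ hp)
    have hEf : ∀ a : A, f a ∈ E ↔ a ∈ P := by
      intro a
      constructor
      · intro ha
        have h1 := hEval (f a) 0 (a * x^0) ha (map_mul f a (x^0)).symm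
        rwa [pow_zero, mul_one] at h1
      · intro ha
        exact (hE (f a)).mpr ⟨0, a, ha, by rw [pow_zero, map_one, mul_one]⟩
    have hEne1 : (1 : A[(Submonoid.powers x)⁻¹]) ∉ E := by
      intro h1
      have := hEval 1 1 (x^1) h1 (by rw [one_mul])
      rw [pow_one] at this
      exact hxP this
    have hEtop : E ≠ ⊤ := by
      intro h
      apply hEne1
      rw [h]
      exact TwoSidedIdeal.mem_top _
    have hEprime : E.IsPrimeTS := by
      refine ⟨hEtop, ?_⟩
      intro α β hαβ
      obtain ⟨n, a0, hα⟩ := L1 α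
      obtain ⟨m, b0, hβ⟩ := L1 β
      have hr : ∀ r : A, a0 * r * b0 ∈ P := by
        intro r
        have hmem : α * (f (x^n) * f r) * β ∈ E := hαβ _
        have heq : α * (f (x^n) * f r) * β * f (x^m) = f (a0 * r * b0) := by
          rw [← mul_assoc α (f (x^n)) (f r), hα, mul_assoc (f a0 * f r) β (f (x^m)), hβ,
            ← map_mul, ← map_mul]
        exact hEval _ m _ hmem heq
      rcases hP.2 a0 b0 hr with h0 | h0
      · exact Or.inl ((hE α).mpr ⟨n, a0, h0, hα⟩)
      · exact Or.inr ((hE β).mpr ⟨m, b0, h0, hβ⟩)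
    exact ⟨E, hE, hEf, hEprime⟩
  have hφone : φ 1 = 1 :=
    (hcl _ _ (by rw [← hφ 1, one_mul, mul_one])).symm
  have hφpowx : ∀ m : ℕ, φ (x^m) = x^m := by
    intro m
    induction m with
    | zero => rw [pow_zero]; exact hφone
    | succ m ih => rw [pow_succ, hφmul, ih, hφx]
  -- span {x} is a prime ideal
  have hspanprime : (TwoSidedIdeal.span {x}).IsPrimeTS :=
    ⟨hxcp.1, fun a b hab => hxcp.2 a b (by have := hab 1; rwa [mul_one] at this)⟩
  have hspanle : ∀ P : TwoSidedIdeal A, x ∈ P → TwoSidedIdeal.span {x} ≤ P := by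
    intro P hxP y hy
    exact TwoSidedIdeal.mem_span_iff.mp hy P
      (fun t ht => by rw [Set.mem_singleton_iff] at ht; rw [ht]; exact hxP)
  -- nonzero primes contain nonzero elements
  have hwit : ∀ P : TwoSidedIdeal A, P ≠ ⊥ → ∃ p0, p0 ∈ P ∧ p0 ≠ 0 := by
    intro P hPbot
    by_contra hcon
    push_neg at hcon
    apply hPbot
    refine eq_bot_iff.mpr fun t ht => ?_
    rw [TwoSidedIdeal.mem_bot]
    exact hcon t ht
  -- ===================== the UFR property =====================
  have hUFR : ∀ P : TwoSidedIdeal A, P.IsPrimeTS → P ≠ ⊥ →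
      ∃ Q : TwoSidedIdeal A, Q ≠ ⊥ ∧ Q.IsPrimeTS ∧ Q.IsPrincipalNormal ∧ Q ≤ P := by
    intro P hP hPbot
    by_cases hxP : x ∈ P
    · refine ⟨TwoSidedIdeal.span {x}, ?_, hspanprime, ⟨x, hxn, hspanx⟩, hspanle P hxP⟩
      intro h
      apply hx0
      have hx1 : x ∈ TwoSidedIdeal.span {x} := TwoSidedIdeal.subset_span (Set.mem_singleton x)
      rw [h, TwoSidedIdeal.mem_bot] at hx1
      exact hx1
    · -- x ∉ P : use the localization
      obtain ⟨E, hE, hEf, hEprime⟩ := hExt P hP hxP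
      have hEbot : E ≠ ⊥ := by
        obtain ⟨p0, hp0P, hp00⟩ := hwit P hPbot
        intro hEb
        have hm : f p0 ∈ E := (hEf p0).mpr hp0P
        rw [hEb, TwoSidedIdeal.mem_bot] at hm
        exact hp00 (hf0 _ hm)
      obtain ⟨Q', hQ'bot, hQ'prime, hQ'pn, hQ'le⟩ := hlocUFR E hEprime hEbot
      obtain ⟨x', hx'norm, hx'mem⟩ := hQ'pn
      have hx'Q : x' ∈ Q' := (hx'mem x').mpr ⟨1, (mul_one x').symm⟩
      have hx'0 : x' ≠ 0 := by
        intro h0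
        apply hQ'bot
        refine eq_bot_iff.mpr fun z hz => ?_
        rw [TwoSidedIdeal.mem_bot]
        obtain ⟨w, hw⟩ := (hx'mem z).mp hz
        rw [hw, h0, zero_mul]
      have hx'meml : ∀ z, z ∈ Q' ↔ ∃ w, z = w * x' := by
        intro z
        constructor
        · intro hz
          obtain ⟨w, hw⟩ := (hx'mem z).mp hz
          obtain ⟨w', hw'⟩ := (Set.ext_iff.mp hx'norm (x' * w)).mp ⟨w, rfl⟩
          exact ⟨w', by rw [hw, hw']⟩
        · rintro ⟨w, rfl⟩
          exact Q'.mul_mem_left _ _ hx'Q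
      -- initial generator
      obtain ⟨n0, g0, hg0⟩ := L1 x'
      have hfg0Q : f g0 ∈ Q' := by
        rw [← hg0]
        exact Q'.mul_mem_right _ _ hx'Q
      have hg0r : ∀ z, z ∈ Q' ↔ ∃ w, z = f g0 * w := by
        intro z
        constructor
        · intro hz
          obtain ⟨w, hw⟩ := (hx'mem z).mp hz
          refine ⟨↑(U^n0)⁻¹ * w, ?_⟩
          rw [← hg0, ← hUn, hw, mul_assoc, ← mul_assoc (↑(U^n0)) _ w, Units.mul_inv, one_mul]
        · rintro ⟨w, rfl⟩
          exact Q'.mul_mem_right _ _ hfg0Q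
      have hg0l : ∀ z, z ∈ Q' ↔ ∃ w, z = w * f g0 := by
        intro z
        constructor
        · intro hz
          have hz' : z * ↑(U^n0)⁻¹ ∈ Q' := Q'.mul_mem_right _ _ hz
          obtain ⟨w, hw⟩ := (hx'meml _).mp hz'
          refine ⟨w, ?_⟩
          have hzz : z = z * ↑(U^n0)⁻¹ * ↑(U^n0) := by
            rw [mul_assoc, Units.inv_mul, mul_one]
          rw [hzz, hw, mul_assoc, hUn, hg0]
        · rintro ⟨w, rfl⟩
          exact Q'.mul_mem_left _ _ hfg0Q
      have hg00 : g0 ≠ 0 := by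
        intro h0
        apply hx'0
        have hfz : f g0 = 0 := by rw [h0, map_zero]
        have hx'e : x' * ↑(U^n0) = 0 := by rw [hUn, hg0, hfz]
        have h2 := congrArg (fun t => t * (↑(U^n0)⁻¹ : A[(Submonoid.powers x)⁻¹])) hx'e
        simpa [mul_assoc, zero_mul] using h2
      -- the descent step
      have hstep : ∀ g g' : A, g ≠ 0 → (∀ z, z ∈ Q' ↔ ∃ w, z = f g * w) →
          (∀ z, z ∈ Q' ↔ ∃ w, z = w * f g) → g = x * g' →
          g' ≠ 0 ∧ (∀ z, z ∈ Q' ↔ ∃ w, z = f g' * w) ∧ (∀ z, z ∈ Q' ↔ ∃ w, z = w * f g') := by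
        intro g g' hg hr hl hgx
        have hfg : f g = ↑U * f g' := by rw [hgx, map_mul, hU]
        have hfgQ : f g ∈ Q' := (hr (f g)).mpr ⟨1, (mul_one _).symm⟩
        refine ⟨fun h0 => hg (by rw [hgx, h0, mul_zero]), ?_, ?_⟩
        · intro z
          constructor
          · intro hz
            have hz' : ↑U * z ∈ Q' := Q'.mul_mem_left _ _ hz
            obtain ⟨w, hw⟩ := (hr _).mp hz'
            rw [hfg, mul_assoc] at hw
            exact ⟨w, (Units.mul_right_inj U).mp hw⟩
          · rintro ⟨w, rfl⟩
            have he : f g' * w = ↑U⁻¹ * (f g * w) := by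
              rw [hfg, ← mul_assoc, ← mul_assoc, Units.inv_mul, one_mul]
            rw [he]
            exact Q'.mul_mem_left _ _ (Q'.mul_mem_right _ _ hfgQ)
        · intro z
          constructor
          · intro hz
            obtain ⟨w, hw⟩ := (hl z).mp hz
            exact ⟨w * ↑U, by rw [hw, hfg, mul_assoc]⟩
          · rintro ⟨w, rfl⟩
            have he : w * f g' = (w * ↑U⁻¹) * f g := by
              rw [hfg, mul_assoc, ← mul_assoc (↑U⁻¹ : A[(Submonoid.powers x)⁻¹]), Units.inv_mul,
                one_mul]
            rw [he]
            exact (hl _).mpr ⟨w * ↑U⁻¹, rfl⟩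
      -- extract a generator not divisible by x (by noetherianity)
      have hexq : ∃ q : A, q ≠ 0 ∧ (∀ z, z ∈ Q' ↔ ∃ w, z = f q * w) ∧
          (∀ z, z ∈ Q' ↔ ∃ w, z = w * f q) ∧ ¬ ∃ g', q = x * g' := by
        by_contra hcon
        push_neg at hcon
        have hnext : ∀ g : A, ∃ g' : A,
            (g ≠ 0 → (∀ z, z ∈ Q' ↔ ∃ w, z = f g * w) → (∀ z, z ∈ Q' ↔ ∃ w, z = w * f g) →
              (g = x * g' ∧ g' ≠ 0 ∧ (∀ z, z ∈ Q' ↔ ∃ w, z = f g' * w) ∧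
                (∀ z, z ∈ Q' ↔ ∃ w, z = w * f g'))) := by
          intro g
          by_cases hg0 : g ≠ 0
          · by_cases hgr : (∀ z, z ∈ Q' ↔ ∃ w, z = f g * w)
            · by_cases hgl : (∀ z, z ∈ Q' ↔ ∃ w, z = w * f g)
              · obtain ⟨g', hg'⟩ := hcon g hg0 hgr hgl
                obtain ⟨h1, h2, h3⟩ := hstep g g' hg0 hgr hgl hg'
                exact ⟨g', fun _ _ _ => ⟨hg', h1, h2, h3⟩⟩
              · exact ⟨0, fun _ _ h => absurd h hgl⟩
            · exact ⟨0, fun _ h _ => absurd h hgr⟩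
          · exact ⟨0, fun h _ _ => absurd h hg0⟩
        choose nxt hnxt using hnext
        set seq : ℕ → A := fun n => Nat.rec g0 (fun _ g => nxt g) n with hseq
        have hseqsucc : ∀ n, seq (n+1) = nxt (seq n) := fun n => rfl
        have hinv : ∀ n, seq n ≠ 0 ∧ (∀ z, z ∈ Q' ↔ ∃ w, z = f (seq n) * w) ∧
            (∀ z, z ∈ Q' ↔ ∃ w, z = w * f (seq n)) := by
          intro n
          induction n with
          | zero => exact ⟨hg00, hg0r, hg0l⟩
          | succ n ih =>
            obtain ⟨h1, h2, h3⟩ := ih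
            obtain ⟨_, h1', h2', h3'⟩ := hnxt (seq n) h1 h2 h3
            rw [hseqsucc]
            exact ⟨h1', h2', h3'⟩
        have hdiv1 : ∀ n, seq n = x * seq (n+1) := by
          intro n
          obtain ⟨h1, h2, h3⟩ := hinv n
          obtain ⟨h0', _, _, _⟩ := hnxt (seq n) h1 h2 h3
          rw [hseqsucc]
          exact h0'
        have hdivk : ∀ (k n : ℕ), seq n = x^k * seq (n+k) := by
          intro k
          induction k with
          | zero =>
            intro n
            simp
          | succ k ih =>
            intro n
            have hidx : n + (k+1) = (n+1) + k := by omega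
            rw [hidx, hdiv1 n, ih (n+1), ← mul_assoc, ← pow_succ']
        have hImono : Monotone (fun n => Ideal.span ((fun i => seq i) '' Set.Iic n)) := by
          apply monotone_nat_of_le_succ
          intro n
          apply Ideal.span_mono
          apply Set.image_mono
          intro t ht
          exact le_trans ht (Nat.le_succ n)
        obtain ⟨N, hN⟩ := monotone_stabilizes_iff_noetherian.mpr hNoeth
          ⟨fun n => Ideal.span ((fun i => seq i) '' Set.Iic n), hImono⟩
        have hmemN : seq (N+1) ∈ Ideal.span ((fun i => seq i) '' Set.Iic N) := by
          have h1 : seq (N+1) ∈ Ideal.span ((fun i => seq i) '' Set.Iic (N+1)) :=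
            Ideal.subset_span ⟨N+1, Set.mem_Iic.mpr (le_refl _), rfl⟩
          have heq := hN (N+1) (Nat.le_succ N)
          simp only [OrderHom.coe_mk] at heq
          rw [heq]
          exact h1
        obtain ⟨cc, hccsupp, hccsum⟩ := Submodule.mem_span_set.mp hmemN
        have hsum : ∀ t ∈ cc.support, ∃ d : A, cc t • t = d * (x * seq (N+1)) := by
          intro t ht
          obtain ⟨i, hiN, hit⟩ := hccsupp ht
          rw [Set.mem_Iic] at hiN
          obtain ⟨m, hm⟩ : ∃ m, N + 1 - i = m + 1 := ⟨N - i, by omega⟩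
          have hti : t = x^(m+1) * seq (N+1) := by
            have h2 := hdivk (N+1-i) i
            rw [show i + (N+1-i) = N+1 by omega, hm] at h2
            rw [← hit]
            exact h2
          refine ⟨cc t * x^m, ?_⟩
          rw [smul_eq_mul]
          nth_rewrite 2 [hti]
          rw [pow_succ, mul_assoc (x^m) x (seq (N+1)), ← mul_assoc (cc t) (x^m)]
        have hfin : ∃ d : A, seq (N+1) = d * (x * seq (N+1)) := by
          have hx2 : ∃ d : A, (cc.sum fun mi r => r • mi) = d * (x * seq (N+1)) := by
            rw [Finsupp.sum]
            refine Finset.sum_induction _ (fun y => ∃ d : A, y = d * (x * seq (N+1))) ?_ ?_ ?_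
            · rintro y z ⟨d1, rfl⟩ ⟨d2, rfl⟩
              exact ⟨d1 + d2, (add_mul _ _ _).symm⟩
            · exact ⟨0, (zero_mul _).symm⟩
            · intro t ht
              exact hsum t ht
          obtain ⟨d, hd⟩ := hx2
          exact ⟨d, hccsum.symm.trans hd⟩
        obtain ⟨d, hd⟩ := hfin
        have hzero : (1 - d * x) * seq (N+1) = 0 := by
          rw [sub_mul, one_mul, mul_assoc, ← hd, sub_self]
        have hne : seq (N+1) ≠ 0 := (hinv (N+1)).1
        have h1 : 1 - d * x = 0 := by
          rcases mul_eq_zero.mp hzero with h | h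
          · exact h
          · exact absurd h hne
        have hdx : d * x = 1 := (sub_eq_zero.mp h1).symm
        apply hxu
        have hxd : x * d = 1 := by
          have h2 : (x * d - 1) * x = 0 := by
            rw [sub_mul, one_mul, mul_assoc, hdx, mul_one, sub_self]
          exact sub_eq_zero.mp (hregr _ h2)
        exact ⟨⟨x, d, hxd, hdx⟩, rfl⟩
      obtain ⟨q, hq0, hqr, hql, hqnd⟩ := hexq
      -- divisibility descents
      have CL : ∀ (m : ℕ) (c z : A), c * q = z * x^m → ∃ d, φ^[m] z = d * q := by
        intro m
        induction m with
        | zero =>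
          intro c z h
          rw [pow_zero, mul_one] at h
          exact ⟨c, by simpa using h.symm⟩
        | succ m ih =>
          intro c z h
          have hmem : c * q ∈ TwoSidedIdeal.span {x} := by
            rw [hspanx']
            exact ⟨z * x^m, by rw [h, pow_succ, ← mul_assoc]⟩
          rcases hxcp.2 c q hmem with hc | hqmem
          · obtain ⟨c₂, hc₂⟩ := (hspanx' c).mp hc
            have h1 : c₂ * ψ q * x = z * x^m * x := by
              rw [mul_assoc, ← hψ q, ← mul_assoc, ← hc₂, h, pow_succ, ← mul_assoc]
            have h2 : c₂ * ψ q = z * x^m := hcr _ _ h1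
            have h3 : φ (c₂ * ψ q) = φ (z * x^m) := by rw [h2]
            rw [hφmul, hφψ, hφmul, hφpowx] at h3
            obtain ⟨d, hd⟩ := ih (φ c₂) (φ z) h3
            exact ⟨d, by rw [Function.iterate_succ_apply]; exact hd⟩
          · exact absurd ((hspanx q).mp hqmem) hqnd
      have CR : ∀ (m : ℕ) (c z : A), z * x^m = q * c → ∃ d, z = q * d := by
        intro m
        induction m with
        | zero =>
          intro c z h
          rw [pow_zero, mul_one] at h
          exact ⟨c, h⟩
        | succ m ih =>
          intro c z h
          have hmem : q * c ∈ TwoSidedIdeal.span {x} := by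
            rw [hspanx']
            exact ⟨z * x^m, by rw [← h, pow_succ, ← mul_assoc]⟩
          rcases hxcp.2 q c hmem with hqmem | hc
          · exact absurd ((hspanx q).mp hqmem) hqnd
          · obtain ⟨c₂, hc₂⟩ := (hspanx' c).mp hc
            have h1 : z * x^m * x = q * c₂ * x := by
              rw [mul_assoc, ← pow_succ, h, hc₂, ← mul_assoc]
            exact ih c₂ z (hcr _ _ h1)
      have hfqQ : f q ∈ Q' := (hqr (f q)).mpr ⟨1, (mul_one _).symm⟩
      have hmemr : ∀ y : A, f y ∈ Q' → ∃ d, y = q * d := by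
        intro y hy
        obtain ⟨w, hw⟩ := (hqr (f y)).mp hy
        obtain ⟨m, c, hwc⟩ := L1 w
        have h1 : y * x^m = q * c := by
          apply hfinj
          rw [map_mul, map_mul, hw, mul_assoc, hwc]
        exact CR m c y h1
      have hmeml : ∀ y : A, f y ∈ Q' → ∃ d, y = d * q := by
        intro y hy
        obtain ⟨w, hw⟩ := (hql (f y)).mp hy
        obtain ⟨m, c, hwc⟩ := L1' w
        have h1 : c * q = ψ^[m] y * x^m := by
          apply hfinj
          calc f (c * q) = f (x^m) * w * f q := by rw [map_mul, hwc]
            _ = f (x^m) * f y := by rw [mul_assoc, ← hw]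
            _ = f (ψ^[m] y * x^m) := by rw [← map_mul, hpowψ m y]
        obtain ⟨d, hd⟩ := CL m c (ψ^[m] y) h1
        rw [hφψit m y] at hd
        exact ⟨d, hd⟩
      have hqnorm : IsNormalElem q := by
        apply Set.Subset.antisymm
        · rintro y ⟨a', rfl⟩
          have hm : f (q * a') ∈ Q' := by
            rw [map_mul]
            exact Q'.mul_mem_right _ _ hfqQ
          exact hmeml _ hm
        · rintro y ⟨a', rfl⟩
          have hm : f (a' * q) ∈ Q' := by
            rw [map_mul]
            exact Q'.mul_mem_left _ _ hfqQ
          exact hmemr _ hm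
      obtain ⟨C, hCmem⟩ := hCJex Q'
      have hCiff : ∀ y, y ∈ C ↔ ∃ d, y = q * d := by
        intro y
        rw [hCmem y]
        constructor
        · exact hmemr y
        · rintro ⟨d, rfl⟩
          rw [map_mul]
          exact Q'.mul_mem_right _ _ hfqQ
      refine ⟨C, ?_, hcontr Q' C hCmem hQ'prime, ⟨q, hqnorm, hCiff⟩, ?_⟩
      · intro hCbot
        apply hq0
        have hqC : q ∈ C := (hCiff q).mpr ⟨1, (mul_one q).symm⟩
        rw [hCbot, TwoSidedIdeal.mem_bot] at hqC
        exact hqC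
      · intro y hy
        have hm : f y ∈ Q' := (hCmem y).mp hy
        exact (hEf y).mp (hQ'le hm)
  -- ===================== height-one primes are completely prime =====================
  have hH1 : ∀ P : TwoSidedIdeal A, P.IsHeightOnePrime → P.IsCompletelyPrime := by
    intro P hP
    obtain ⟨hPprime, hPbot, hPmin⟩ := hP
    by_cases hxP : x ∈ P
    · have heq : TwoSidedIdeal.span {x} = P := by
        by_contra hne
        have hlt : TwoSidedIdeal.span {x} < P := lt_of_le_of_ne (hspanle P hxP) hne
        have hbot := hPmin _ hspanprime hlt
        apply hx0
        have hx1 : x ∈ TwoSidedIdeal.span {x} := TwoSidedIdeal.subset_span (Set.mem_singleton x)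
        rw [hbot, TwoSidedIdeal.mem_bot] at hx1
        exact hx1
      rw [← heq]
      exact hxcp
    · obtain ⟨E, hE, hEf, hEprime⟩ := hExt P hPprime hxP
      have hEbot : E ≠ ⊥ := by
        obtain ⟨p0, hp0P, hp00⟩ := hwit P hPbot
        intro hEb
        have hm : f p0 ∈ E := (hEf p0).mpr hp0P
        rw [hEb, TwoSidedIdeal.mem_bot] at hm
        exact hp00 (hf0 _ hm)
      have hEh1 : E.IsHeightOnePrime := by
        refine ⟨hEprime, hEbot, ?_⟩
        intro J hJprime hJlt
        obtain ⟨C, hCmem⟩ := hCJex J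
        have hCP : C ≤ P := by
          intro y hy
          exact (hEf y).mp (le_of_lt hJlt ((hCmem y).mp hy))
        have hCprime : C.IsPrimeTS := hcontr J C hCmem hJprime
        have hCneP : C ≠ P := by
          intro hCeq
          have hEJ : E ≤ J := by
            intro z hz
            obtain ⟨n, p, hpP, hzp⟩ := (hE z).mp hz
            have hfp : f p ∈ J := (hCmem p).mp (by rw [hCeq]; exact hpP)
            have hzeq : z = f p * ↑(U^n)⁻¹ := by
              rw [← hzp, ← hUn, mul_assoc, Units.mul_inv, mul_one]
            rw [hzeq]
            exact J.mul_mem_right _ _ hfp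
          exact (lt_iff_le_not_ge.mp hJlt).2 hEJ
        have hCbot : C = ⊥ := hPmin C hCprime (lt_of_le_of_ne hCP hCneP)
        refine eq_bot_iff.mpr fun z hz => ?_
        rw [TwoSidedIdeal.mem_bot]
        obtain ⟨n, c, hzc⟩ := L1 z
        have hcC : c ∈ C := (hCmem c).mpr (by rw [← hzc]; exact J.mul_mem_right _ _ hz)
        rw [hCbot, TwoSidedIdeal.mem_bot] at hcC
        have hz0 : z * ↑(U^n) = 0 := by rw [hUn, hzc, hcC, map_zero]
        have h2 := congrArg (fun t => t * (↑(U^n)⁻¹ : A[(Submonoid.powers x)⁻¹])) hz0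
        simpa [mul_assoc, zero_mul] using h2
      have hEcp := hlocH1 E hEh1
      refine ⟨hPprime.1, ?_⟩
      intro a b hab
      have hm : f a * f b ∈ E := by
        rw [← map_mul]
        exact (hEf _).mpr hab
      rcases hEcp.2 (f a) (f b) hm with h | h
      · exact Or.inl ((hEf a).mp h)
      · exact Or.inr ((hEf b).mp h)
  exact ⟨⟨hPrime, hNoeth, hUFR⟩, hdomA, hH1⟩
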